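/- Let T be a finite nonabelian simple group, k ≥ 2 an integer, D = {(t,…,t) : t ∈ T} the full diagonal subgroup of T^k, V the set of right cosets of D in T^k, and M ≤ Sym(V) the image of the right multiplication action of T^k on V. Let G be a group with M ≤ G ≤ N_{Sym(V)}(M), the normalizer of M in Sym(V) (this normalizer is the group written T^k.(Out(T) × S_k)), and let Γ be a connected (G,2)-arc-transitive digraph with vertex set V, where G is a group of automorphisms of Γ. If w = D(t_1,…,t_k) is an out-neighbour in Γ of the vertex v = D, where the representative is chosen with t_k = 1, then ⟨t_1,…,t_k⟩ = T. -/

import Mathlib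

open scoped Pointwise

/-- An `s`-arc of the digraph `(V, r)`. -/
def IsSArc {V : Type*} (r : V → V → Prop) (s : ℕ) (v : ℕ → V) : Prop :=
  ∀ i < s, r (v i) (v (i + 1))

/-- The digraph `(V, r)` is `(G, s)`-arc-transitive. -/
def ArcTrans {V : Type*} (r : V → V → Prop) (G : Subgroup (Equiv.Perm V)) (s : ℕ) : Prop :=
  ∀ v w : ℕ → V, IsSArc r s v → IsSArc r s w → ∃ g ∈ G, ∀ i ≤ s, g (v i) = w i

/-- The full diagonal subgroup `{(t,…,t) : t ∈ T}` of the direct power `ι → T`. -/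
def diagSubgroup (ι : Type*) (T : Type*) [Group T] : Subgroup (ι → T) where
  carrier := {f | ∃ t : T, f = fun _ => t}
  one_mem' := ⟨1, rfl⟩
  mul_mem' := by rintro a b ⟨s, rfl⟩ ⟨t, rfl⟩; exact ⟨s * t, rfl⟩
  inv_mem' := by rintro a ⟨t, rfl⟩; exact ⟨t⁻¹, rfl⟩

/-- Right multiplication by `a ∈ G` as a permutation of the right cosets of `H`. -/
def rmulPerm {G : Type*} [Group G] (H : Subgroup G) (a : G) :
    Equiv.Perm (Quotient (QuotientGroup.rightRel H)) where
  toFun := Quotient.map' (fun x => x * a) (by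
    intro x y h
    rw [QuotientGroup.rightRel_apply] at h ⊢
    have e : y * a * (x * a)⁻¹ = y * x⁻¹ := by group
    rw [e]; exact h)
  invFun := Quotient.map' (fun x => x * a⁻¹) (by
    intro x y h
    rw [QuotientGroup.rightRel_apply] at h ⊢
    have e : y * a⁻¹ * (x * a⁻¹)⁻¹ = y * x⁻¹ := by group
    rw [e]; exact h)
  left_inv := by
    intro q; refine Quotient.inductionOn' q ?_
    intro x; simp [Quotient.map'_mk'']
  right_inv := by
    intro q; refine Quotient.inductionOn' q ?_
    intro x; simp [Quotient.map'_mk'']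

/-- The homomorphism given by the right multiplication action of `G` on the right
cosets of `H`; its range is the permutation group `M` induced by this action. -/
def rmulHom {G : Type*} [Group G] (H : Subgroup G) :
    G →* Equiv.Perm (Quotient (QuotientGroup.rightRel H)) where
  toFun a := rmulPerm H a⁻¹
  map_one' := by
    ext q; refine Quotient.inductionOn' q ?_
    intro x; simp [rmulPerm, Quotient.map'_mk'']
  map_mul' a b := by
    ext q; refine Quotient.inductionOn' q ?_
    intro x; simp [rmulPerm, Quotient.map'_mk'', mul_assoc]

lemma mk_eq_mk' {G : Type*} [Group G] (H : Subgroup G) {x y : G} :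
    Quotient.mk (QuotientGroup.rightRel H) x = Quotient.mk (QuotientGroup.rightRel H) y ↔
      y * x⁻¹ ∈ H := by
  rw [Quotient.eq]
  exact QuotientGroup.rightRel_apply

lemma rmulHom_mk' {G : Type*} [Group G] (H : Subgroup G) (a x : G) :
    rmulHom H a (Quotient.mk (QuotientGroup.rightRel H) x) =
      Quotient.mk (QuotientGroup.rightRel H) (x * a⁻¹) := rfl

lemma mem_diag_iff' {ι T : Type*} [Group T] {x : ι → T} :
    x ∈ diagSubgroup ι T ↔ ∃ s : T, x = fun _ => s := Iff.rfl

lemma center_eq_bot' {T : Type*} [Group T] (hTsimple : IsSimpleGroup T)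
    (hTnonab : ∃ a b : T, a * b ≠ b * a) : Subgroup.center T = ⊥ := by
  rcases hTsimple.eq_bot_or_eq_top_of_normal (Subgroup.center T) inferInstance with h | h
  · exact h
  · exfalso
    obtain ⟨a, b, hab⟩ := hTnonab
    have hb : b ∈ Subgroup.center T := by rw [h]; trivial
    exact hab (Subgroup.mem_center_iff.mp hb a)

lemma hom_pi_struct {T : Type*} [Group T] [Finite T]
    (hTsimple : IsSimpleGroup T) (hTnonab : ∃ a b : T, a * b ≠ b * a)
    {k : ℕ} (f : (Fin k → T) →* T) (hf : Function.Surjective f) :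
    ∃ (j : Fin k) (φ : T →* T), Function.Surjective φ ∧ ∀ x, f x = φ (x j) := by
  classical
  set ψ : Fin k → (T →* T) := fun j => f.comp (MonoidHom.mulSingle (fun _ => T) j) with hψ
  have hψapp : ∀ (j : Fin k) (z : T), ψ j z = f (Pi.mulSingle j z) := fun _ _ => rfl
  have hnormal : ∀ j, (ψ j).range.Normal := by
    intro j
    constructor
    rintro n ⟨x, rfl⟩ s
    obtain ⟨y, rfl⟩ := hf s
    refine ⟨y j * x * (y j)⁻¹, ?_⟩
    have e : Pi.mulSingle (M := fun _ : Fin k => T) j (y j * x * (y j)⁻¹) =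
        y * Pi.mulSingle j x * y⁻¹ := by
      funext i
      by_cases hij : i = j
      · subst hij; simp [Pi.mulSingle_apply]
      · simp [Pi.mulSingle_apply, hij]
    rw [hψapp, hψapp, e, map_mul, map_mul, map_inv]
  by_cases hex : ∃ j, (ψ j).range = ⊤
  · obtain ⟨j, hj⟩ := hex
    have hsurj : Function.Surjective (ψ j) := MonoidHom.range_eq_top.mp hj
    refine ⟨j, ψ j, hsurj, ?_⟩
    have key : ∀ y : Fin k → T, y j = 1 → f y = 1 := by
      intro y hyj
      have hcomm : ∀ s : T, Pi.mulSingle (M := fun _ : Fin k => T) j s * y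
          = y * Pi.mulSingle j s := by
        intro s; funext i
        by_cases hij : i = j
        · subst hij; simp [Pi.mulSingle_apply, hyj]
        · simp [Pi.mulSingle_apply, hij]
      have hyc : f y ∈ Subgroup.center T := by
        rw [Subgroup.mem_center_iff]
        intro g
        obtain ⟨s, rfl⟩ := hsurj g
        have h2 := congrArg f (hcomm s)
        rw [map_mul, map_mul] at h2
        rw [hψapp]
        exact h2
      rw [center_eq_bot' hTsimple hTnonab, Subgroup.mem_bot] at hyc
      exact hyc
    intro x
    have h1 : f x = ψ j (x j)
        * f ((Pi.mulSingle (M := fun _ : Fin k => T) j (x j))⁻¹ * x) := by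
      rw [hψapp, ← map_mul]
      congr 1
      group
    rw [h1, key _ (by simp), mul_one]
  · push_neg at hex
    have htriv : ∀ (j : Fin k) (x : T), ψ j x = 1 := by
      intro j x
      have hr : (ψ j).range = ⊥ := ((hnormal j).eq_bot_or_eq_top).resolve_right (hex j)
      have hx : ψ j x ∈ (ψ j).range := ⟨x, rfl⟩
      rwa [hr, Subgroup.mem_bot] at hx
    exfalso
    have hall : ∀ s : Finset (Fin k), ∀ x : Fin k → T, (∀ i ∉ s, x i = 1) → f x = 1 := by
      intro s
      induction s using Finset.induction_on with
      | empty =>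
        intro x hx
        have : x = 1 := funext fun i => hx i (by simp)
        rw [this, map_one]
      | @insert a s ha ih =>
        intro x hx
        have h1 : f x = ψ a (x a)
            * f ((Pi.mulSingle (M := fun _ : Fin k => T) a (x a))⁻¹ * x) := by
          rw [hψapp, ← map_mul]
          congr 1
          group
        have hyy : ∀ i ∉ s,
            ((Pi.mulSingle (M := fun _ : Fin k => T) a (x a))⁻¹ * x) i = 1 := by
          intro i hi
          by_cases hia : i = a
          · subst hia; simp
          · have h3 := hx i (by simp [hia, hi])
            simp [Pi.mulSingle_apply, hia, h3]
        rw [h1, htriv, ih _ hyy, one_mul]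
    obtain ⟨a, b, hab⟩ := hTnonab
    have hne : a * b * (b * a)⁻¹ ≠ 1 := fun h => hab (by
      rw [mul_inv_eq_one] at h; exact h)
    obtain ⟨x, hxx⟩ := hf (a * b * (b * a)⁻¹)
    exact hne (hxx ▸ hall Finset.univ x (fun i hi => absurd (Finset.mem_univ i) hi))

lemma normalizer_struct {T : Type*} [Group T] [Finite T]
    (hTsimple : IsSimpleGroup T) (hTnonab : ∃ a b : T, a * b ≠ b * a)
    {k : ℕ} (hk : 2 ≤ k)
    (g : Equiv.Perm (Quotient (QuotientGroup.rightRel (diagSubgroup (Fin k) T))))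
    (hgN : g ∈ Subgroup.normalizer (rmulHom (diagSubgroup (Fin k) T)).range)
    (hgv : g (Quotient.mk (QuotientGroup.rightRel (diagSubgroup (Fin k) T)) 1) =
      Quotient.mk (QuotientGroup.rightRel (diagSubgroup (Fin k) T)) 1) :
    ∃ (φ : T →* T) (σ : Fin k → Fin k), Function.Injective φ ∧
      ∀ y : Fin k → T,
        g (Quotient.mk (QuotientGroup.rightRel (diagSubgroup (Fin k) T)) y) =
          Quotient.mk (QuotientGroup.rightRel (diagSubgroup (Fin k) T))
            (fun i => φ (y (σ i))) := by
  classical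
  -- injectivity of the right multiplication representation
  have hπinj : Function.Injective (rmulHom (diagSubgroup (Fin k) T)) := by
    rw [injective_iff_map_eq_one]
    intro x hx
    have hfix : ∀ y : Fin k → T, y * x * y⁻¹ ∈ diagSubgroup (Fin k) T := by
      intro y
      have h1 : rmulHom (diagSubgroup (Fin k) T) x
          (Quotient.mk (QuotientGroup.rightRel (diagSubgroup (Fin k) T)) y)
          = Quotient.mk (QuotientGroup.rightRel (diagSubgroup (Fin k) T)) y := by rw [hx]; rfl
      rw [rmulHom_mk'] at h1
      have h2 := (mk_eq_mk' (diagSubgroup (Fin k) T)).mp h1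
      have e : y * (y * x⁻¹)⁻¹ = y * x * y⁻¹ := by group
      rwa [e] at h2
    obtain ⟨s, hs⟩ : x ∈ diagSubgroup (Fin k) T := by
      have := hfix 1
      simpa using this
    subst hs
    have hne : (⟨1, by omega⟩ : Fin k) ≠ ⟨0, by omega⟩ := by simp [Fin.ext_iff]
    have hcen : s ∈ Subgroup.center T := by
      rw [Subgroup.mem_center_iff]
      intro b
      obtain ⟨u, hu⟩ := hfix (Pi.mulSingle ⟨0, by omega⟩ b)
      have h0 := congrFun hu ⟨0, by omega⟩
      have h1 := congrFun hu ⟨1, by omega⟩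
      simp only [Pi.mul_apply, Pi.inv_apply] at h0 h1
      rw [Pi.mulSingle_eq_same] at h0
      rw [Pi.mulSingle_eq_of_ne hne] at h1
      rw [one_mul, inv_one, mul_one] at h1
      rw [← h1] at h0
      have := congrArg (· * b) h0
      simpa [mul_assoc] using this
    rw [center_eq_bot' hTsimple hTnonab, Subgroup.mem_bot] at hcen
    subst hcen
    rfl
  -- the automorphism induced by conjugation by g
  have hmem : ∀ x : Fin k → T, ∃ y : Fin k → T,
      rmulHom (diagSubgroup (Fin k) T) y = g * rmulHom (diagSubgroup (Fin k) T) x * g⁻¹ :=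
    fun x => (Subgroup.mem_normalizer_iff.mp hgN (rmulHom (diagSubgroup (Fin k) T) x)).mp ⟨x, rfl⟩
  choose θ hθ using hmem
  have hθmul : ∀ x y, θ (x * y) = θ x * θ y := by
    intro x y
    apply hπinj
    rw [map_mul, hθ, hθ, hθ, map_mul]
    group
  have hθone : θ 1 = 1 := by
    apply hπinj
    rw [hθ, map_one]
    group
  have hθinv : ∀ y, θ y⁻¹ = (θ y)⁻¹ := by
    intro y
    have h : θ y⁻¹ * θ y = 1 := by rw [← hθmul, inv_mul_cancel, hθone]
    exact eq_inv_of_mul_eq_one_left h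
  have hθsurj : Function.Surjective θ := by
    intro y
    have h2 : g⁻¹ * rmulHom (diagSubgroup (Fin k) T) y * g
        ∈ (rmulHom (diagSubgroup (Fin k) T)).range := by
      have h3 := (Subgroup.mem_normalizer_iff.mp (inv_mem hgN)
        (rmulHom (diagSubgroup (Fin k) T) y)).mp ⟨y, rfl⟩
      simpa using h3
    obtain ⟨x, hx⟩ := h2
    refine ⟨x, hπinj ?_⟩
    rw [hθ, hx]
    group
  have hgv' : g⁻¹ (Quotient.mk (QuotientGroup.rightRel (diagSubgroup (Fin k) T)) 1)
      = Quotient.mk (QuotientGroup.rightRel (diagSubgroup (Fin k) T)) 1 := by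
    conv_lhs => rw [← hgv]
    exact Equiv.symm_apply_apply g _
  -- action formula
  have hact : ∀ y : Fin k → T,
      g (Quotient.mk (QuotientGroup.rightRel (diagSubgroup (Fin k) T)) y)
      = Quotient.mk (QuotientGroup.rightRel (diagSubgroup (Fin k) T)) (θ y) := by
    intro y
    have h1 : Quotient.mk (QuotientGroup.rightRel (diagSubgroup (Fin k) T)) y
        = rmulHom (diagSubgroup (Fin k) T) y⁻¹
          (Quotient.mk (QuotientGroup.rightRel (diagSubgroup (Fin k) T)) 1) := by
      rw [rmulHom_mk']
      simp
    have h2 : rmulHom (diagSubgroup (Fin k) T) (θ y⁻¹)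
          (Quotient.mk (QuotientGroup.rightRel (diagSubgroup (Fin k) T)) 1)
        = Quotient.mk (QuotientGroup.rightRel (diagSubgroup (Fin k) T)) (θ y) := by
      rw [rmulHom_mk', one_mul, hθinv, inv_inv]
    rw [h1, ← h2, hθ y⁻¹]
    simp [Equiv.Perm.mul_apply, hgv']
  -- θ preserves the diagonal
  have hθD : ∀ d, d ∈ diagSubgroup (Fin k) T → θ d ∈ diagSubgroup (Fin k) T := by
    intro d hd
    have h1 : rmulHom (diagSubgroup (Fin k) T) d
        (Quotient.mk (QuotientGroup.rightRel (diagSubgroup (Fin k) T)) 1)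
        = Quotient.mk (QuotientGroup.rightRel (diagSubgroup (Fin k) T)) 1 := by
      rw [rmulHom_mk', one_mul]
      exact (mk_eq_mk' (diagSubgroup (Fin k) T)).mpr (by simpa using hd)
    have h2 : rmulHom (diagSubgroup (Fin k) T) (θ d)
        (Quotient.mk (QuotientGroup.rightRel (diagSubgroup (Fin k) T)) 1)
        = Quotient.mk (QuotientGroup.rightRel (diagSubgroup (Fin k) T)) 1 := by
      rw [hθ]
      simp [Equiv.Perm.mul_apply, hgv', h1, hgv]
    rw [rmulHom_mk', one_mul] at h2
    have h3 := (mk_eq_mk' (diagSubgroup (Fin k) T)).mp h2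
    simpa using h3
  -- coordinatewise structure
  have hstr : ∀ i : Fin k, ∃ (j : Fin k) (φ : T →* T), Function.Surjective φ ∧
      ∀ x, ((Pi.evalMonoidHom (fun _ : Fin k => T) i).comp (MonoidHom.mk' θ hθmul)) x
        = φ (x j) := by
    intro i
    refine hom_pi_struct hTsimple hTnonab _ ?_
    rw [MonoidHom.coe_comp]
    exact Function.Surjective.comp
      (fun a => ⟨fun _ => a, rfl⟩ : Function.Surjective
        (Pi.evalMonoidHom (fun _ : Fin k => T) i)) hθsurj
  choose σ φs hφsurj hφeq using hstr
  have hφeq' : ∀ (i : Fin k) (x : Fin k → T), θ x i = φs i (x (σ i)) := fun i x => hφeq i x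
  have hφall : ∀ (i : Fin k) (a : T), φs i a = φs (⟨0, by omega⟩ : Fin k) a := by
    intro i a
    obtain ⟨u, hu⟩ := hθD (fun _ => a) ⟨a, rfl⟩
    have e1 : θ (fun _ => a) i = u := by rw [hu]
    have e2 : θ (fun _ => a) (⟨0, by omega⟩ : Fin k) = u := by rw [hu]
    rw [hφeq' i] at e1
    rw [hφeq' (⟨0, by omega⟩ : Fin k)] at e2
    rw [e1, e2]
  refine ⟨φs (⟨0, by omega⟩ : Fin k), σ,
    Finite.injective_iff_surjective.mpr (hφsurj _), ?_⟩
  intro y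
  rw [hact y, show θ y = fun i => φs (⟨0, by omega⟩ : Fin k) (y (σ i)) from
    funext fun i => by rw [hφeq' i, hφall i]]

/-- **Lemma 3.6.** In the setting of Theorem 3 — `T` a finite nonabelian
simple group, `k ≥ 2`, `D` the diagonal subgroup of `T^k`, `M ≤ G ≤ N_{Sym(V)}(M)`, and
`Γ` a connected `(G,2)`-arc-transitive digraph on the right cosets `V` of `D` — if
`w = D(t_1,…,t_k)` is an out-neighbour of `v = D` with representative chosen so that
`t_k = 1`, then `⟨t_1,…,t_k⟩ = T`. -/
theorem stmt19 {T : Type*} [Group T] [Finite T]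
    (hTsimple : IsSimpleGroup T) (hTnonab : ∃ a b : T, a * b ≠ b * a)
    (k : ℕ) (hk : 2 ≤ k)
    (G : Subgroup (Equiv.Perm (Quotient (QuotientGroup.rightRel (diagSubgroup (Fin k) T)))))
    (hMG : (rmulHom (diagSubgroup (Fin k) T)).range ≤ G)
    (hGN : G ≤ Subgroup.normalizer (rmulHom (diagSubgroup (Fin k) T)).range)
    (arc : Quotient (QuotientGroup.rightRel (diagSubgroup (Fin k) T)) →
      Quotient (QuotientGroup.rightRel (diagSubgroup (Fin k) T)) → Prop)
    (hirr : ∀ A, ¬ arc A A) (hasym : ∀ A B, arc A B → ¬ arc B A)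
    (hconn : ∀ A B, Relation.ReflTransGen (fun X Y => arc X Y ∨ arc Y X) A B)
    (hGaut : ∀ g ∈ G, ∀ A B, arc A B ↔ arc (g A) (g B))
    (hG2 : ArcTrans arc G 2)
    (t : Fin k → T) (htk : t ⟨k - 1, by omega⟩ = 1)
    (hw : arc (Quotient.mk (QuotientGroup.rightRel (diagSubgroup (Fin k) T)) 1)
      (Quotient.mk (QuotientGroup.rightRel (diagSubgroup (Fin k) T)) t)) :
    Subgroup.closure (Set.range t) = (⊤ : Subgroup T) := by

  classical
  have hπG : ∀ x : Fin k → T, rmulHom (diagSubgroup (Fin k) T) x ∈ G := fun x => hMG ⟨x, rfl⟩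
  have move : ∀ (x : Fin k → T) (A B), arc A B →
      arc (rmulHom (diagSubgroup (Fin k) T) x A) (rmulHom (diagSubgroup (Fin k) T) x B) :=
    fun x A B h => (hGaut _ (hπG x) A B).mp h
  have arc2 : arc (Quotient.mk (QuotientGroup.rightRel (diagSubgroup (Fin k) T)) t)
      (Quotient.mk (QuotientGroup.rightRel (diagSubgroup (Fin k) T)) (t * t)) := by
    have h := move t⁻¹ _ _ hw
    rw [rmulHom_mk', rmulHom_mk', inv_inv, one_mul] at h
    exact h
  -- the key consequence of 2-arc-transitivity
  have key : ∀ a : T, ∃ c : T, c ∈ Subgroup.closure (Set.range t) ∧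
      ∀ i, t i * (a * c) = (a * c) * t i := by
    intro a
    have harc3 : arc (Quotient.mk (QuotientGroup.rightRel (diagSubgroup (Fin k) T)) (1 : Fin k → T))
        (Quotient.mk (QuotientGroup.rightRel (diagSubgroup (Fin k) T)) (fun i => a⁻¹ * t i * a)) := by
      have h := move (fun _ => a)⁻¹ _ _ hw
      rw [rmulHom_mk', rmulHom_mk', inv_inv] at h
      have e0 : Quotient.mk (QuotientGroup.rightRel (diagSubgroup (Fin k) T))
          ((1 : Fin k → T) * fun _ => a)
          = Quotient.mk (QuotientGroup.rightRel (diagSubgroup (Fin k) T)) (1 : Fin k → T) :=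
        (mk_eq_mk' _).mpr (mem_diag_iff'.mpr ⟨a⁻¹, by funext i; show 1 * ((1 : T) * a)⁻¹ = a⁻¹; group⟩)
      have e1 : Quotient.mk (QuotientGroup.rightRel (diagSubgroup (Fin k) T)) (t * fun _ => a)
          = Quotient.mk (QuotientGroup.rightRel (diagSubgroup (Fin k) T)) (fun i => a⁻¹ * t i * a) :=
        (mk_eq_mk' _).mpr (mem_diag_iff'.mpr ⟨a⁻¹, by
          funext i; show (a⁻¹ * t i * a) * (t i * a)⁻¹ = a⁻¹; group⟩)
      rw [e0, e1] at h
      exact h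
    have harc4 : arc (Quotient.mk (QuotientGroup.rightRel (diagSubgroup (Fin k) T)) t)
        (Quotient.mk (QuotientGroup.rightRel (diagSubgroup (Fin k) T))
          ((fun i => a⁻¹ * t i * a) * t)) := by
      have h := move t⁻¹ _ _ harc3
      rw [rmulHom_mk', rmulHom_mk', inv_inv, one_mul] at h
      exact h
    obtain ⟨g, hgG, hg⟩ := hG2
      (fun n => if n = 0 then Quotient.mk (QuotientGroup.rightRel (diagSubgroup (Fin k) T)) (1 : Fin k → T)
        else if n = 1 then Quotient.mk (QuotientGroup.rightRel (diagSubgroup (Fin k) T)) t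
        else Quotient.mk (QuotientGroup.rightRel (diagSubgroup (Fin k) T)) (t * t))
      (fun n => if n = 0 then Quotient.mk (QuotientGroup.rightRel (diagSubgroup (Fin k) T)) (1 : Fin k → T)
        else if n = 1 then Quotient.mk (QuotientGroup.rightRel (diagSubgroup (Fin k) T)) t
        else Quotient.mk (QuotientGroup.rightRel (diagSubgroup (Fin k) T)) ((fun i => a⁻¹ * t i * a) * t))
      (by
        intro i hi
        interval_cases i
        · simpa using hw
        · simpa using arc2)
      (by
        intro i hi
        interval_cases i
        · simpa using hw
        · simpa using harc4)
    have hg0 := hg 0 (by norm_num)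
    have hg1 := hg 1 (by norm_num)
    have hg2 := hg 2 (by norm_num)
    norm_num at hg0 hg1 hg2
    obtain ⟨φ, σ, hφinj, hgact⟩ := normalizer_struct hTsimple hTnonab hk g (hGN hgG) hg0
    rw [hgact] at hg1 hg2
    obtain ⟨c, hc⟩ := mem_diag_iff'.mp ((mk_eq_mk' _).mp hg1)
    have hci : ∀ i, t i * (φ (t (σ i)))⁻¹ = c := fun i => congrFun hc i
    obtain ⟨c', hc'⟩ := mem_diag_iff'.mp ((mk_eq_mk' _).mp hg2)
    have hc'i : ∀ i, (a⁻¹ * t i * a * t i) * (φ (t (σ i) * t (σ i)))⁻¹ = c' :=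
      fun i => congrFun hc' i
    have hc'' : ∀ i, (a⁻¹ * t i * a * t i) * (φ (t (σ i)) * φ (t (σ i)))⁻¹ = c' := by
      intro i
      have h := hc'i i
      rwa [map_mul] at h
    have hA : ∀ i, φ (t (σ i)) = c⁻¹ * t i := by
      intro i
      rw [← hci i]
      group
    have hcK : c = (φ (t (σ ⟨k - 1, by omega⟩)))⁻¹ := by
      have h := hci ⟨k - 1, by omega⟩
      rw [htk, one_mul] at h
      exact h.symm
    have hAK : φ (t (σ ⟨k - 1, by omega⟩)) = c⁻¹ := by
      have h := hA ⟨k - 1, by omega⟩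
      rwa [htk, mul_one] at h
    have hc'K : c' = c * c := by
      have h := hc'' ⟨k - 1, by omega⟩
      rw [htk, hAK] at h
      rw [← h]
      group
      exact zpow_two c
    have hz : ∀ i, t i * (a * c) = (a * c) * t i := by
      intro i
      have h := hc'' i
      rw [hA i, hc'K] at h
      have e2 : a⁻¹ * t i * a * c * (t i)⁻¹ * c = c * c := by rw [← h]; group
      have e3 : a⁻¹ * t i * a * c * (t i)⁻¹ = c := mul_right_cancel e2
      have e4 : a⁻¹ * (t i * (a * c)) = c * t i := by
        have e4' : a⁻¹ * (t i * (a * c)) = (a⁻¹ * t i * a * c * (t i)⁻¹) * t i := by group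
        rw [e4', e3]
      have e5 := congrArg (a * ·) e4
      simpa [mul_assoc, mul_inv_cancel_left] using e5
    have hAm : ∀ i, φ (t (σ i)) ∈ (Subgroup.closure (Set.range t)).map φ := fun i =>
      ⟨t (σ i), Subgroup.subset_closure ⟨σ i, rfl⟩, rfl⟩
    have hcm : c ∈ (Subgroup.closure (Set.range t)).map φ := by
      rw [hcK]
      exact inv_mem (hAm _)
    have hle : Subgroup.closure (Set.range t) ≤ (Subgroup.closure (Set.range t)).map φ := by
      rw [Subgroup.closure_le]
      rintro x ⟨i, rfl⟩
      have h : t i = c * φ (t (σ i)) := by rw [hA i]; group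
      rw [h]
      exact mul_mem hcm (hAm i)
    have heq : ((Subgroup.closure (Set.range t) : Subgroup T) : Set T)
        = ((Subgroup.closure (Set.range t)).map φ : Set T) := by
      apply Set.eq_of_subset_of_ncard_le hle
      rw [← Nat.card_coe_set_eq, ← Nat.card_coe_set_eq]
      exact le_of_eq (Nat.card_congr
        (Subgroup.equivMapOfInjective (Subgroup.closure (Set.range t)) φ hφinj).toEquiv).symm
    refine ⟨c, ?_, hz⟩
    have : c ∈ ((Subgroup.closure (Set.range t)).map φ : Set T) := hcm
    rw [← heq] at this
    exact this
  -- normality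
  have hnormal : (Subgroup.closure (Set.range t)).Normal := by
    constructor
    intro n hn b
    obtain ⟨c, hcH, hzc⟩ := key b
    have hzH : ∀ x ∈ Subgroup.closure (Set.range t), (b * c) * x = x * (b * c) := by
      intro x hx
      refine Subgroup.closure_induction ?_ ?_ ?_ ?_ hx
      · rintro x ⟨i, rfl⟩
        exact (hzc i).symm
      · simp
      · intro x y _ _ hx1 hy1
        rw [← mul_assoc, hx1, mul_assoc, hy1, ← mul_assoc]
      · intro x _ hx1
        have : Commute (b * c) x := hx1
        exact this.inv_right
    have hm : c⁻¹ * n * c ∈ Subgroup.closure (Set.range t) :=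
      mul_mem (mul_mem (inv_mem hcH) hn) hcH
    have hzm := hzH _ hm
    have e : b * n * b⁻¹ = (b * c) * (c⁻¹ * n * c) * (b * c)⁻¹ := by group
    rw [e, hzm, mul_inv_cancel_right]
    exact hm
  rcases hTsimple.eq_bot_or_eq_top_of_normal _ hnormal with hbot | htop
  · exfalso
    have ht1 : ∀ i, t i = 1 := by
      intro i
      have h : t i ∈ Subgroup.closure (Set.range t) := Subgroup.subset_closure ⟨i, rfl⟩
      rw [hbot, Subgroup.mem_bot] at h
      exact h
    have ht : t = (1 : Fin k → T) := funext ht1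
    rw [ht] at hw
    exact hirr _ hw
  · exact htop
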